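/- arXiv:1606.01844 — 3 statements merged into one kernel-verified Lean document; each statement's English description precedes it below -/
import Mathlib

section
/- Let X=(V,E,T) be a 2-dimensional simplicial complex and let G₁(X) = (V_{G₁}, E_{G₁}) be its edge-graph. For any subset of vertices S ⊆ V_{G₁} of the edge-graph, let F ⊆ E be the corresponding subset of edges of X. Then the number of edges of G₁(X) with exactly one endpoint in S equals the sum over all vertices v ∈ V of |δ(F_v)|, i.e., |E_{G₁}(S, S̄)| = Σ_{v ∈ V} |δ(F_v)|. -/
open Finset

/-- Symmetric-difference distance between two finite sets. -/
def sdist {α : Type} [DecidableEq α] (A B : Finset α) : ℕ :=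
  (A \ B).card + (B \ A).card

/-- Distance from a finite set to a family of finite sets. -/
noncomputable def famDist {α : Type} [DecidableEq α] (A : Finset α) (Z : Set (Finset α)) : ℕ :=
  sInf {d | ∃ z ∈ Z, sdist A z = d}

/-- `E` and `T` form the edges and triangles of a 2-dimensional simplicial complex on `V`. -/
def IsComplex {V : Type} [DecidableEq V] (E T : Finset (Finset V)) : Prop :=
  (∀ e ∈ E, e.card = 2) ∧ (∀ t ∈ T, t.card = 3) ∧
    ∀ t ∈ T, ∀ e, e ⊆ t → e.card = 2 → e ∈ E

/-- The complex is `(k₀, k₁)`-regular. -/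
def IsRegularComplex {V : Type} [Fintype V] [DecidableEq V]
    (E T : Finset (Finset V)) (k₀ k₁ : ℕ) : Prop :=
  (∀ v : V, (E.filter (fun e => v ∈ e)).card = k₀) ∧
    ∀ e ∈ E, (T.filter (fun t => e ⊆ t)).card = k₁

/-- Coboundary of a set of vertices: edges with exactly one endpoint in `S`. -/
def delta0 {V : Type} [DecidableEq V] (E : Finset (Finset V)) (S : Finset V) :
    Finset (Finset V) :=
  E.filter (fun e => (e ∩ S).card = 1)

/-- Coboundary of a set of edges: triangles containing an odd number of edges of `F`. -/
def delta1 {V : Type} [DecidableEq V] (T F : Finset (Finset V)) : Finset (Finset V) :=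
  T.filter (fun t => Odd ((F.filter (fun e => e ⊆ t)).card))

/-- Local view of a vertex `v` with regard to a set of edges `F`. -/
def localView {V : Type} [DecidableEq V] (F : Finset (Finset V)) (v : V) :
    Finset (Finset V) :=
  F.filter (fun e => v ∈ e)

/-- The 0-cocycles. -/
def Z0 {V : Type} [DecidableEq V] (E : Finset (Finset V)) : Set (Finset V) :=
  {S | delta0 E S = ∅}

/-- The 1-coboundaries: coboundaries of vertex sets (cuts). -/
def B1 {V : Type} [Fintype V] [DecidableEq V] (E : Finset (Finset V)) :
    Set (Finset (Finset V)) :=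
  {B | ∃ S : Finset V, B = delta0 E S}

/-- The 1-cocycles: sets of edges with empty coboundary. -/
def Z1 {V : Type} [DecidableEq V] (E T : Finset (Finset V)) : Set (Finset (Finset V)) :=
  {F | F ⊆ E ∧ delta1 T F = ∅}

/-- `(ε, μ)`-cosystolic expansion of a `(k₀, k₁)`-regular 2-dimensional complex. -/
def IsCosystolicExpander {V : Type} [Fintype V] [DecidableEq V]
    (E T : Finset (Finset V)) (k₀ k₁ : ℕ) (ε μ : ℝ) : Prop :=
  (∀ S : Finset V,
      (delta0 E S = ∅ →
        S = ∅ ∨ S = Finset.univ ∨ μ * (Fintype.card V : ℝ) ≤ (S.card : ℝ)) ∧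
      (delta0 E S ≠ ∅ →
        ε * (k₀ : ℝ) * (famDist S (Z0 E) : ℝ) ≤ ((delta0 E S).card : ℝ))) ∧
  (∀ F : Finset (Finset V), F ⊆ E →
      (delta1 T F = ∅ → F ∈ B1 E ∨ μ * (E.card : ℝ) ≤ (F.card : ℝ)) ∧
      (delta1 T F ≠ ∅ →
        ε * (k₁ : ℝ) * (famDist F (Z1 E T) : ℝ) ≤ ((delta1 T F).card : ℝ)))

/-- The underlying graph `G₀(X)` of the complex. -/
def G0 {V : Type} [DecidableEq V] (E : Finset (Finset V)) : SimpleGraph V where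
  Adj u v := u ≠ v ∧ ({u, v} : Finset V) ∈ E
  symm := ⟨fun u v h => ⟨h.1.symm, by rw [Finset.pair_comm]; exact h.2⟩⟩
  loopless := ⟨fun v h => h.1 rfl⟩

instance {V : Type} [DecidableEq V] (E : Finset (Finset V)) : DecidableRel (G0 E).Adj :=
  fun _ _ => inferInstanceAs (Decidable (_ ∧ _))

/-- The edge-graph `G₁(X)` of the complex: vertices are the edges of `X`, two edges
adjacent iff their union is a triangle. -/
def EdgeGraph {V : Type} [DecidableEq V] (E T : Finset (Finset V)) :
    SimpleGraph {e // e ∈ E} where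
  Adj e f := e ≠ f ∧ (e.val ∪ f.val) ∈ T
  symm := ⟨fun e f h => ⟨h.1.symm, by rw [Finset.union_comm]; exact h.2⟩⟩
  loopless := ⟨fun e h => h.1 rfl⟩

instance {V : Type} [DecidableEq V] (E T : Finset (Finset V)) :
    DecidableRel (EdgeGraph E T).Adj :=
  fun _ _ => inferInstanceAs (Decidable (_ ∧ _))

lemma adjMatrix_isHermitian {α : Type} [Fintype α] (G : SimpleGraph α)
    [DecidableRel G.Adj] : (SimpleGraph.adjMatrix ℝ G).IsHermitian := by
  refine Matrix.IsHermitian.ext fun i j => ?_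
  simp [SimpleGraph.adjMatrix_apply, SimpleGraph.adj_comm]

/-- The eigenvalues of the adjacency matrix of `G`, sorted in ascending order. -/
noncomputable def eigsAsc {α : Type} [Fintype α] [DecidableEq α] (G : SimpleGraph α)
    [DecidableRel G.Adj] : List ℝ :=
  Multiset.sort
    ((Finset.univ : Finset α).val.map (adjMatrix_isHermitian G).eigenvalues) (· ≤ ·)

/-- The normalized `i`-th largest adjacency eigenvalue (1-indexed) of a `k`-regular
graph `G`: `λ̃ᵢ = λᵢ / k`. -/
noncomputable def normEig {α : Type} [Fintype α] [DecidableEq α] (G : SimpleGraph α)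
    [DecidableRel G.Adj] (k i : ℕ) : ℝ :=
  (eigsAsc G).getD (Fintype.card α - i) 0 / (k : ℝ)

/-- The number of edges of `G` with exactly one endpoint in `S` (counted via the
ordered pairs `(u, v)` with `u ∈ S`, `v ∉ S`, `u ~ v`). -/
def cutEdges {α : Type} [Fintype α] [DecidableEq α] (G : SimpleGraph α)
    [DecidableRel G.Adj] (S : Finset α) : ℕ :=
  ((S ×ˢ Sᶜ).filter fun p => G.Adj p.1 p.2).card

/-- The normalized Cheeger constant of a `k`-regular graph. -/
noncomputable def normCheeger {α : Type} [Fintype α] [DecidableEq α] (G : SimpleGraph α)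
    [DecidableRel G.Adj] (k : ℕ) : ℝ :=
  sInf {x : ℝ | ∃ S : Finset α, 0 < S.card ∧ (S.card : ℝ) ≤ (Fintype.card α : ℝ) / 2 ∧
    x = (cutEdges G S : ℝ) / ((k : ℝ) * (S.card : ℝ))}

/-- The random walk on the `d`-regular graph `G` is `a`-rapidly mixing: from any initial
distribution, after `i` steps of the walk (with transition matrix `(1/d) • A(G)`),
the ℓ₂ distance to the uniform distribution is at most `a ^ i`. -/
def WalkRapidMixing {α : Type} [Fintype α] [DecidableEq α] (G : SimpleGraph α)
    [DecidableRel G.Adj] (d : ℕ) (a : ℝ) : Prop :=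
  ∀ p₀ : α → ℝ, (∀ x, 0 ≤ p₀ x) → (∑ x, p₀ x = 1) → ∀ i : ℕ,
    Real.sqrt (∑ x, ((((d : ℝ)⁻¹ • SimpleGraph.adjMatrix ℝ G) ^ i).mulVec p₀ x
      - (Fintype.card α : ℝ)⁻¹) ^ 2) ≤ a ^ i


lemma pair_subset_triple {V : Type} [DecidableEq V] {a b c : V} {e : Finset V}
    (he : e ⊆ ({a, b, c} : Finset V)) (h2 : e.card = 2) :
    e = {a, b} ∨ e = {a, c} ∨ e = {b, c} := by
  obtain ⟨x, y, hxy, rfl⟩ := Finset.card_eq_two.mp h2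
  have hx : x ∈ ({a, b, c} : Finset V) := he (by simp)
  have hy : y ∈ ({a, b, c} : Finset V) := he (by simp)
  simp only [Finset.mem_insert, Finset.mem_singleton] at hx hy
  rcases hx with rfl | rfl | rfl <;> rcases hy with rfl | rfl | rfl <;>
    simp_all [Finset.pair_comm]

set_option maxHeartbeats 3000000 in
lemma triangle_case {V : Type} [DecidableEq V] (F : Finset (Finset V)) (a b c : V)
    (hab : a ≠ b) (hac : a ≠ c) (hbc : b ≠ c) :
    ((({ {a,b}, {a,c}, {b,c} } : Finset (Finset V)) ×ˢ { {a,b}, {a,c}, {b,c} }).filter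
        (fun p => p.1 ∈ F ∧ p.2 ∉ F ∧ p.1 ∪ p.2 = ({a,b,c} : Finset V))).card =
      (({a,b,c} : Finset V).filter (fun v => Odd
        ((({ {a,b}, {a,c}, {b,c} } : Finset (Finset V)).filter
          (fun e => e ∈ F ∧ v ∈ e)).card))).card := by
  have hc1 : c ∉ ({a,b} : Finset V) := by
    simp only [Finset.mem_insert, Finset.mem_singleton]
    rintro (rfl | rfl) <;> simp_all
  have hbn2 : b ∉ ({a,c} : Finset V) := by
    simp only [Finset.mem_insert, Finset.mem_singleton]
    rintro (rfl | rfl) <;> simp_all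
  have han3 : a ∉ ({b,c} : Finset V) := by
    simp only [Finset.mem_insert, Finset.mem_singleton]
    rintro (rfl | rfl) <;> simp_all
  have ne12 : ({a,b} : Finset V) ≠ {a,c} := fun h => hbn2 (h ▸ (by simp))
  have ne13 : ({a,b} : Finset V) ≠ {b,c} := fun h => han3 (h ▸ (by simp))
  have ne23 : ({a,c} : Finset V) ≠ {b,c} := fun h => han3 (h ▸ (by simp))
  have hu12 : ({a,b} : Finset V) ∪ {a,c} = {a,b,c} := by ext x; simp only [Finset.mem_union, Finset.mem_insert, Finset.mem_singleton]; tauto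
  have hu21 : ({a,c} : Finset V) ∪ {a,b} = {a,b,c} := by ext x; simp only [Finset.mem_union, Finset.mem_insert, Finset.mem_singleton]; tauto
  have hu13 : ({a,b} : Finset V) ∪ {b,c} = {a,b,c} := by ext x; simp only [Finset.mem_union, Finset.mem_insert, Finset.mem_singleton]; tauto
  have hu31 : ({b,c} : Finset V) ∪ {a,b} = {a,b,c} := by ext x; simp only [Finset.mem_union, Finset.mem_insert, Finset.mem_singleton]; tauto
  have hu23 : ({a,c} : Finset V) ∪ {b,c} = {a,b,c} := by ext x; simp only [Finset.mem_union, Finset.mem_insert, Finset.mem_singleton]; tauto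
  have hu32 : ({b,c} : Finset V) ∪ {a,c} = {a,b,c} := by ext x; simp only [Finset.mem_union, Finset.mem_insert, Finset.mem_singleton]; tauto
  have hct : ({a,b,c} : Finset V).card = 3 := by
    rw [Finset.card_insert_of_notMem (by simp [hab, hac]),
      Finset.card_insert_of_notMem (by simp [hbc]), Finset.card_singleton]
  have hne1t : ({a,b} : Finset V) ≠ {a,b,c} := fun h => by
    rw [← h, Finset.card_pair hab] at hct; omega
  have hne2t : ({a,c} : Finset V) ≠ {a,b,c} := fun h => by
    rw [← h, Finset.card_pair hac] at hct; omega
  have hne3t : ({b,c} : Finset V) ≠ {a,b,c} := fun h => by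
    rw [← h, Finset.card_pair hbc] at hct; omega
  have hs1 : ({a} : Finset V) ∪ {b} = {a, b} := by ext x; simp
  have hs2 : ({a} : Finset V) ∪ {c} = {a, c} := by ext x; simp
  have hs3 : ({b} : Finset V) ∪ {c} = {b, c} := by ext x; simp
  have hs1' : ({b} : Finset V) ∪ {a} = {a, b} := by ext x; simp; tauto
  have hs2' : ({c} : Finset V) ∪ {a} = {a, c} := by ext x; simp; tauto
  have hs3' : ({c} : Finset V) ∪ {b} = {b, c} := by ext x; simp; tauto
  have hp1 : ({b,a,c} : Finset V) = {a,b,c} := Finset.insert_comm _ _ _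
  have hp2 : ({a,c,b} : Finset V) = {a,b,c} := by rw [Finset.pair_comm]
  have hp3 : ({b,c,a} : Finset V) = {a,b,c} := by ext x; simp; tauto
  have hp4 : ({c,a,b} : Finset V) = {a,b,c} := by ext x; simp; tauto
  have hp5 : ({c,b,a} : Finset V) = {a,b,c} := by ext x; simp; tauto
  rw [Finset.card_filter, Finset.sum_product, Finset.card_filter]
  by_cases hF1 : ({a,b} : Finset V) ∈ F <;> by_cases hF2 : ({a,c} : Finset V) ∈ F <;>
      by_cases hF3 : ({b,c} : Finset V) ∈ F <;>
    simp [Finset.sum_insert, Finset.sum_singleton, Finset.filter_insert,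
      Finset.filter_singleton, hab, hac, hbc, hab.symm, hac.symm, hbc.symm,
      hF1, hF2, hF3, hc1, hbn2, han3, ne12, ne13, ne23,
      hu12, hu21, hu13, hu31, hu23, hu32, hne1t, hne2t, hne3t,
      Finset.card_insert_of_notMem, Finset.union_self, Nat.odd_iff,
      hs1, hs2, hs3, hs1', hs2', hs3', Finset.insert_union, Finset.union_insert, Finset.insert_comm, hp1, hp2, hp3, hp4, hp5]

lemma triangle_count {V : Type} [DecidableEq V] {E T : Finset (Finset V)}
    (hX : IsComplex E T) {F : Finset (Finset V)} (hF : F ⊆ E) {t : Finset V} (ht : t ∈ T) :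
    ((E ×ˢ E).filter (fun p => p.1 ∈ F ∧ p.2 ∉ F ∧ p.1 ∪ p.2 = t)).card =
      (t.filter (fun v => Odd ((F.filter (fun e => v ∈ e ∧ e ⊆ t)).card))).card := by
  obtain ⟨hE2, hT3, hcl⟩ := hX
  obtain ⟨a, b, c, hab, hac, hbc, rfl⟩ := Finset.card_eq_three.mp (hT3 t ht)
  have h1t : ({a,b} : Finset V) ⊆ {a,b,c} := by
    intro x hx; simp only [Finset.mem_insert, Finset.mem_singleton] at hx ⊢; tauto
  have h2t : ({a,c} : Finset V) ⊆ {a,b,c} := by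
    intro x hx; simp only [Finset.mem_insert, Finset.mem_singleton] at hx ⊢; tauto
  have h3t : ({b,c} : Finset V) ⊆ {a,b,c} := by
    intro x hx; simp only [Finset.mem_insert, Finset.mem_singleton] at hx ⊢; tauto
  have he1E : ({a,b} : Finset V) ∈ E := hcl _ ht _ h1t (Finset.card_pair hab)
  have he2E : ({a,c} : Finset V) ∈ E := hcl _ ht _ h2t (Finset.card_pair hac)
  have he3E : ({b,c} : Finset V) ∈ E := hcl _ ht _ h3t (Finset.card_pair hbc)
  have hedges : ∀ e ∈ E, e ⊆ ({a,b,c} : Finset V) → e = {a,b} ∨ e = {a,c} ∨ e = {b,c} :=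
    fun e heE hsub => pair_subset_triple hsub (hE2 e heE)
  have hL : (E ×ˢ E).filter (fun p => p.1 ∈ F ∧ p.2 ∉ F ∧ p.1 ∪ p.2 = ({a,b,c} : Finset V)) =
      (({ {a,b}, {a,c}, {b,c} } : Finset (Finset V)) ×ˢ { {a,b}, {a,c}, {b,c} }).filter
        (fun p => p.1 ∈ F ∧ p.2 ∉ F ∧ p.1 ∪ p.2 = ({a,b,c} : Finset V)) := by
    ext ⟨p1, p2⟩
    simp only [Finset.mem_filter, Finset.mem_product, Finset.mem_insert, Finset.mem_singleton]
    constructor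
    · rintro ⟨⟨hp1, hp2⟩, h1, h2, hu⟩
      have hs1 : p1 ⊆ ({a,b,c} : Finset V) := hu ▸ Finset.subset_union_left
      have hs2 : p2 ⊆ ({a,b,c} : Finset V) := hu ▸ Finset.subset_union_right
      exact ⟨⟨hedges _ hp1 hs1, hedges _ hp2 hs2⟩, h1, h2, hu⟩
    · rintro ⟨⟨hp1, hp2⟩, h1, h2, hu⟩
      refine ⟨⟨?_, ?_⟩, h1, h2, hu⟩
      · rcases hp1 with rfl | rfl | rfl <;> assumption
      · rcases hp2 with rfl | rfl | rfl <;> assumption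
  have hFv : ∀ v : V, F.filter (fun e => v ∈ e ∧ e ⊆ ({a,b,c} : Finset V)) =
      ({ {a,b}, {a,c}, {b,c} } : Finset (Finset V)).filter (fun e => e ∈ F ∧ v ∈ e) := by
    intro v
    ext e
    simp only [Finset.mem_filter, Finset.mem_insert, Finset.mem_singleton]
    constructor
    · rintro ⟨heF, hv, hsub⟩
      exact ⟨hedges e (hF heF) hsub, heF, hv⟩
    · rintro ⟨h, heF, hv⟩
      refine ⟨heF, hv, ?_⟩
      rcases h with rfl | rfl | rfl <;> assumption
  rw [hL]
  simp only [hFv]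
  exact triangle_case F a b c hab hac hbc

theorem edge_cut_eq_sum_of_coboundaries_of_local_views
    {V : Type} [Fintype V] [DecidableEq V] (E T : Finset (Finset V))
    (hX : IsComplex E T) (S : Finset {e // e ∈ E}) :
    cutEdges (EdgeGraph E T) S =
      ∑ v : V, (delta1 T (localView (S.image Subtype.val) v)).card := by
  classical
  set F := S.image Subtype.val with hFdef
  have hFE : F ⊆ E := by
    intro e he
    rw [hFdef, Finset.mem_image] at he
    obtain ⟨x, _, rfl⟩ := he
    exact x.2
  have h1 : cutEdges (EdgeGraph E T) S =
      ((E ×ˢ E).filter (fun p => p.1 ∈ F ∧ p.2 ∉ F ∧ p.1 ∪ p.2 ∈ T)).card := by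
    apply Finset.card_nbij (fun p => (p.1.val, p.2.val))
    · rintro ⟨e, f⟩ hp
      simp only [Finset.mem_coe, Finset.mem_filter, Finset.mem_product, Finset.mem_compl] at hp ⊢
      obtain ⟨⟨heS, hfS⟩, hne, hT'⟩ := hp
      refine ⟨⟨e.2, f.2⟩, Finset.mem_image_of_mem _ heS, ?_, hT'⟩
      intro hf
      rw [hFdef, Finset.mem_image] at hf
      obtain ⟨g, hg, hgf⟩ := hf
      exact hfS ((Subtype.ext hgf : g = f) ▸ hg)
    · rintro ⟨e, f⟩ - ⟨e', f'⟩ - h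
      simp only [Prod.mk.injEq] at h
      exact Prod.ext (Subtype.ext h.1) (Subtype.ext h.2)
    · rintro ⟨x, y⟩ hx
      simp only [Finset.coe_filter, Finset.mem_product, Set.mem_setOf_eq] at hx
      obtain ⟨⟨hxE, hyE⟩, hxF, hyF, hT'⟩ := hx
      rw [hFdef, Finset.mem_image] at hxF
      obtain ⟨e, heS, rfl⟩ := hxF
      refine ⟨(e, ⟨y, hyE⟩), ?_, rfl⟩
      simp only [Finset.coe_filter, Set.mem_setOf_eq, Finset.mem_product, Finset.mem_compl]
      refine ⟨⟨heS, fun hyS => hyF (Finset.mem_image_of_mem _ hyS)⟩, (⟨fun h => hyF ?_, hT'⟩ : _ ∧ _)⟩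
      have hey : (e : Finset V) = y := by rw [h]
      exact hey ▸ Finset.mem_image_of_mem _ heS
  rw [h1, Finset.card_eq_sum_card_fiberwise
    (f := fun p => p.1 ∪ p.2) (t := T)
    (fun p hp => (Finset.mem_filter.mp hp).2.2.2)]
  have hR : ∀ v : V, (delta1 T (localView F v)).card =
      ∑ t ∈ T, if Odd ((F.filter (fun e => v ∈ e ∧ e ⊆ t)).card) then 1 else 0 := by
    intro v
    rw [delta1, Finset.card_filter]
    refine Finset.sum_congr rfl fun t _ => ?_
    congr 2
    rw [localView, Finset.filter_filter]
  rw [show (∑ v : V, (delta1 T (localView F v)).card) =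
      ∑ t ∈ T, ∑ v : V, (if Odd ((F.filter (fun e => v ∈ e ∧ e ⊆ t)).card) then 1 else 0) by
    simp only [hR]; exact Finset.sum_comm]
  refine Finset.sum_congr rfl fun t htT => ?_
  have hfib : ((E ×ˢ E).filter (fun p => p.1 ∈ F ∧ p.2 ∉ F ∧ p.1 ∪ p.2 ∈ T)).filter
      (fun p => p.1 ∪ p.2 = t) =
      (E ×ˢ E).filter (fun p => p.1 ∈ F ∧ p.2 ∉ F ∧ p.1 ∪ p.2 = t) := by
    ext p
    simp only [Finset.mem_filter]
    constructor
    · rintro ⟨⟨hE', h1', h2', -⟩, hu⟩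
      exact ⟨hE', h1', h2', hu⟩
    · rintro ⟨hE', h1', h2', hu⟩
      exact ⟨⟨hE', h1', h2', hu ▸ htT⟩, hu⟩
  rw [hfib, triangle_count ⟨hX.1, hX.2.1, fun t' ht' e he h2 => hX.2.2 t' ht' e he h2⟩ hFE htT]
  rw [← Finset.card_filter]
  congr 1
  ext v
  simp only [Finset.mem_filter, Finset.mem_univ, true_and]
  constructor
  · exact fun hv => hv.2
  · intro hv
    refine ⟨?_, hv⟩
    have hpos : 0 < (F.filter (fun e => v ∈ e ∧ e ⊆ t)).card := by
      rcases Nat.eq_zero_or_pos (F.filter (fun e => v ∈ e ∧ e ⊆ t)).card with h0 | h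
      · rw [h0] at hv; simp [Nat.odd_iff] at hv
      · exact h
    obtain ⟨e, he⟩ := Finset.card_pos.mp hpos
    rw [Finset.mem_filter] at he
    exact he.2.2 he.2.1
end

section
/- Let G=(V,E) be a k-regular graph with normalized second largest adjacency eigenvalue λ̃₂ < 1/2, and suppose |V| ≥ 4/(1−2λ̃₂). Then for every subset of vertices S with ∅ ≠ S ⊊ V, the number of edges with exactly one endpoint in S satisfies |E(S, S̄)| ≥ k. -/
open Finset

section LargeCutsAux

open Matrix

private lemma count_gt_le_one' (l : List ℝ) (hs : l.Pairwise (· ≤ ·)) (hn : 2 ≤ l.length) :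
    l.countP (fun x => decide (l.getD (l.length - 2) 0 < x)) ≤ 1 := by
  set m := l.length with hm
  set c := l.getD (m - 2) 0 with hc
  have hidx : m - 2 < m := by omega
  have hget : c = l[m - 2] := by rw [hc, List.getD_eq_getElem l 0 hidx]
  have hsplit : l = l.take (m-1) ++ l.drop (m-1) := (List.take_append_drop _ l).symm
  have h1 : (l.take (m-1)).countP (fun x => decide (c < x)) = 0 := by
    rw [List.countP_eq_zero]
    intro a ha
    rw [List.mem_take_iff_getElem] at ha
    obtain ⟨i, hi, rfl⟩ := ha
    have hile : i ≤ m - 2 := by omega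
    have := hs.rel_get_of_le (a := ⟨i, by omega⟩) (b := ⟨m-2, hidx⟩) hile
    simp only [List.get_eq_getElem] at this
    simpa [hget] using not_lt.2 this
  have h2 : (l.drop (m-1)).countP (fun x => decide (c < x)) ≤ 1 := by
    calc _ ≤ (l.drop (m-1)).length := List.countP_le_length
    _ ≤ 1 := by simp [List.length_drop]; omega
  calc l.countP (fun x => decide (c < x))
      = (l.take (m-1)).countP _ + (l.drop (m-1)).countP _ := by
        conv_lhs => rw [hsplit]
        rw [List.countP_append]
    _ ≤ 1 := by omega

variable {α : Type} [Fintype α] [DecidableEq α]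

private lemma eig_filter_card_le_one' (G : SimpleGraph α) [DecidableRel G.Adj]
    (hn : 2 ≤ Fintype.card α) :
    (univ.filter fun i =>
      (eigsAsc G).getD (Fintype.card α - 2) 0 < (adjMatrix_isHermitian G).eigenvalues i).card
      ≤ 1 := by
  set μ := (adjMatrix_isHermitian G).eigenvalues with hμ
  set l := eigsAsc G with hl
  have hlen : l.length = Fintype.card α := by
    rw [hl, eigsAsc, Multiset.length_sort, Multiset.card_map]
    rfl
  have hsorted : l.Pairwise (· ≤ ·) := Multiset.pairwise_sort _ _
  have hcount := count_gt_le_one' l hsorted (by omega)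
  rw [hlen] at hcount
  set c := l.getD (Fintype.card α - 2) 0 with hc
  calc (univ.filter fun i => c < μ i).card
      = Multiset.card (Multiset.filter (fun a => c < μ a) (univ : Finset α).val) := rfl
    _ = Multiset.countP (fun x => c < x) ((univ : Finset α).val.map μ) :=
        (Multiset.countP_map μ (univ : Finset α).val (fun x => c < x)).symm
    _ = Multiset.countP (fun x => c < x) (l : Multiset ℝ) := by
        rw [hl, eigsAsc, Multiset.sort_eq]
    _ = l.countP (fun x => decide (c < x)) := Multiset.coe_countP _ _
    _ ≤ 1 := hcount

private lemma rayleigh_aux' {G : SimpleGraph α} [DecidableRel G.Adj] {k : ℕ} {L : ℝ}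
    (hreg : G.IsRegularOfDegree k) (hn : 2 ≤ Fintype.card α)
    (hL : L < k)
    (hcount : (univ.filter fun i => L < (adjMatrix_isHermitian G).eigenvalues i).card ≤ 1)
    (x : α → ℝ) (h0 : ∑ t, x t = 0) :
    ∑ t, x t * ((SimpleGraph.adjMatrix ℝ G) *ᵥ x) t ≤ L * ∑ t, x t ^ 2 := by
  have : Nonempty α := Fintype.card_pos_iff.mp (by omega)
  set A := SimpleGraph.adjMatrix ℝ G with hAdef
  set hA := adjMatrix_isHermitian G
  set b := hA.eigenvectorBasis with hb
  set μ := hA.eigenvalues with hμ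
  have hexp : ∀ (y : α → ℝ) (t : α), y t = ∑ i, (∑ u, b i u * y u) * b i t := by
    intro y t
    have h := b.sum_repr (WithLp.toLp 2 y)
    have h2 : ∀ i, b.repr (WithLp.toLp 2 y) i = ∑ u, b i u * y u := by
      intro i
      rw [b.repr_apply_apply]
      simp [PiLp.inner_apply, RCLike.inner_apply, conj_trivial, mul_comm]
    calc y t = (∑ i, b.repr (WithLp.toLp 2 y) i • b i) t := by rw [h]
      _ = _ := by
          rw [WithLp.ofLp_sum, Finset.sum_apply]
          exact Finset.sum_congr rfl fun i _ => by rw [h2]; rfl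
  have hAcoef : ∀ (y : α → ℝ) (i : α), ∑ t, b i t * (A *ᵥ y) t = μ i * ∑ u, b i u * y u := by
    intro y i
    have hsym : ∀ t u, A t u = A u t := fun t u => by
      simp [hAdef, SimpleGraph.adjMatrix_apply, SimpleGraph.adj_comm]
    have heig := hA.mulVec_eigenvectorBasis i
    calc ∑ t, b i t * (A *ᵥ y) t = ∑ t, ∑ u, b i t * (A t u * y u) := by
          simp [Matrix.mulVec, dotProduct, Finset.mul_sum]
      _ = ∑ u, (∑ t, A u t * b i t) * y u := by
          rw [Finset.sum_comm]
          exact Finset.sum_congr rfl fun u _ => by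
            rw [Finset.sum_mul]
            exact Finset.sum_congr rfl fun t _ => by rw [hsym t u]; ring
      _ = ∑ u, (μ i * b i u) * y u := by
          refine Finset.sum_congr rfl fun u _ => ?_
          congr 1
          have : (A *ᵥ ⇑(b i)) u = (μ i • ⇑(b i)) u := by rw [heig]
          simpa [Matrix.mulVec, dotProduct] using this
      _ = μ i * ∑ u, b i u * y u := by
          rw [Finset.mul_sum]; exact Finset.sum_congr rfl fun u _ => by ring
  have hsum_sq : ∑ t, x t ^ 2 = ∑ i, (∑ u, b i u * x u) ^ 2 := by
    calc ∑ t, x t ^ 2 = ∑ t, (∑ i, (∑ u, b i u * x u) * b i t) * x t := by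
          refine Finset.sum_congr rfl fun t _ => ?_
          rw [← hexp x t]; ring
      _ = ∑ i, (∑ u, b i u * x u) * ∑ t, b i t * x t := by
          simp only [Finset.sum_mul, Finset.mul_sum]
          rw [Finset.sum_comm]
          exact Finset.sum_congr rfl fun i _ => Finset.sum_congr rfl fun t _ =>
            Finset.sum_congr rfl fun u _ => by ring
      _ = ∑ i, (∑ u, b i u * x u) ^ 2 := Finset.sum_congr rfl fun i _ => by ring
  have hquad : ∑ t, x t * (A *ᵥ x) t = ∑ i, μ i * (∑ u, b i u * x u) ^ 2 := by
    calc ∑ t, x t * (A *ᵥ x) t = ∑ t, (∑ i, (∑ u, b i u * x u) * b i t) * (A *ᵥ x) t := by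
          refine Finset.sum_congr rfl fun t _ => ?_
          rw [← hexp x t]
      _ = ∑ i, (∑ u, b i u * x u) * ∑ t, b i t * (A *ᵥ x) t := by
          simp only [Finset.sum_mul, Finset.mul_sum]
          rw [Finset.sum_comm]
          exact Finset.sum_congr rfl fun i _ => Finset.sum_congr rfl fun t _ =>
            Finset.sum_congr rfl fun u _ => by ring
      _ = ∑ i, μ i * (∑ u, b i u * x u) ^ 2 := by
          refine Finset.sum_congr rfl fun i _ => ?_
          rw [hAcoef x i]; ring
  rw [hquad, hsum_sq, Finset.mul_sum]
  have hka : ∀ i, μ i * (∑ u, b i u * 1) = k * (∑ u, b i u * 1) := by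
    intro i
    have h1 : (A *ᵥ (fun _ => (1:ℝ))) = fun _ => (k:ℝ) := by
      funext t
      simp [hAdef, hreg t]
    have h3 := hAcoef (fun _ => (1:ℝ)) i
    rw [h1] at h3
    rw [← h3, Finset.mul_sum]
    exact Finset.sum_congr rfl fun u _ => by ring
  by_cases hall : ∀ i, μ i ≤ L
  · exact Finset.sum_le_sum fun i _ => mul_le_mul_of_nonneg_right (hall i) (sq_nonneg _)
  · push_neg at hall
    obtain ⟨j, hj⟩ := hall
    have hother : ∀ i, i ≠ j → μ i ≤ L := by
      intro i hij
      by_contra hi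
      push_neg at hi
      have h2 : ({i, j} : Finset α) ⊆ univ.filter fun i => L < μ i := by
        intro z hz
        simp only [Finset.mem_insert, Finset.mem_singleton] at hz
        rcases hz with rfl | rfl <;> simp [hi, hj]
      have := Finset.card_le_card h2
      rw [Finset.card_insert_of_notMem (by simpa using hij), Finset.card_singleton] at this
      omega
    have hones : ∀ t : α, (1:ℝ) = ∑ i, (∑ u, b i u * 1) * b i t := fun t => hexp (fun _ => 1) t
    have hex : ∃ i, (∑ u, b i u * 1) ≠ 0 := by
      by_contra hno
      push_neg at hno
      obtain ⟨t⟩ := ‹Nonempty α›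
      have := hones t
      simp only [hno, zero_mul, Finset.sum_const_zero] at this
      exact one_ne_zero this
    obtain ⟨i₀, hi₀⟩ := hex
    have hμi₀ : μ i₀ = k := by
      have h2 : (μ i₀ - k) * (∑ u, b i₀ u * 1) = 0 := by linarith [hka i₀]
      rcases mul_eq_zero.mp h2 with h | h
      · linarith
      · exact absurd h hi₀
    have hij : i₀ = j := by
      by_contra hne
      have := hother i₀ hne
      rw [hμi₀] at this
      linarith
    subst hij
    have hai : ∀ i, i ≠ i₀ → (∑ u, b i u * 1) = 0 := by
      intro i hne
      have h2 : (μ i - k) * (∑ u, b i u * 1) = 0 := by linarith [hka i]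
      rcases mul_eq_zero.mp h2 with h | h
      · exfalso; have := hother i hne; rw [hμi₀] at hj; linarith
      · exact h
    have hbj : ∀ t, (∑ u, b i₀ u * 1) * b i₀ t = 1 := by
      intro t
      have h4 := hones t
      rw [Finset.sum_eq_single i₀ (fun i _ hne => by rw [hai i hne]; ring) (by simp)] at h4
      exact h4.symm
    have hcj : (∑ u, b i₀ u * x u) = 0 := by
      calc (∑ u, b i₀ u * x u) = ∑ u, (∑ v, b i₀ v * 1)⁻¹ * x u :=
            Finset.sum_congr rfl fun u _ => by
              rw [eq_inv_of_mul_eq_one_right (hbj u)]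
        _ = (∑ v, b i₀ v * 1)⁻¹ * ∑ u, x u := by rw [Finset.mul_sum]
        _ = 0 := by rw [h0, mul_zero]
    refine Finset.sum_le_sum fun i _ => ?_
    by_cases hie : i = i₀
    · subst hie; rw [hcj]; ring_nf; exact le_refl _
    · exact mul_le_mul_of_nonneg_right (hother i hie) (sq_nonneg _)

variable {G : SimpleGraph α} [DecidableRel G.Adj]

private lemma row_sum' {k : ℕ} (hreg : G.IsRegularOfDegree k) (t : α) :
    ∑ u, (SimpleGraph.adjMatrix ℝ G) t u = k := by
  simp only [SimpleGraph.adjMatrix_apply]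
  rw [Finset.sum_boole]
  rw [← SimpleGraph.neighborFinset_eq_filter]
  rw [SimpleGraph.card_neighborFinset_eq_degree, hreg t]

private lemma cut_real' (S : Finset α) :
    (cutEdges G S : ℝ) = ∑ t ∈ S, ∑ u ∈ Sᶜ, (SimpleGraph.adjMatrix ℝ G) t u := by
  rw [cutEdges, Finset.card_filter]
  push_cast
  rw [Finset.sum_product]
  exact Finset.sum_congr rfl fun t _ => Finset.sum_congr rfl fun u _ => by
    simp [SimpleGraph.adjMatrix_apply]

private lemma cut_ks' {k : ℕ} (hreg : G.IsRegularOfDegree k) (S : Finset α) :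
    (cutEdges G S : ℝ)
      = k * S.card - ∑ t ∈ S, ∑ u ∈ S, (SimpleGraph.adjMatrix ℝ G) t u := by
  have h : ∀ t ∈ S, (∑ u ∈ S, (SimpleGraph.adjMatrix ℝ G) t u)
      + ∑ u ∈ Sᶜ, (SimpleGraph.adjMatrix ℝ G) t u = k := by
    intro t _
    rw [Finset.sum_add_sum_compl]
    exact row_sum' hreg t
  rw [cut_real']
  have := Finset.sum_congr rfl h
  rw [Finset.sum_add_distrib] at this
  rw [Finset.sum_const, nsmul_eq_mul] at this
  have hcard : (S.card : ℝ) * k = k * S.card := by ring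
  linarith [this]

private lemma inS_le' (S : Finset α) :
    ∑ t ∈ S, ∑ u ∈ S, (SimpleGraph.adjMatrix ℝ G) t u ≤ S.card * (S.card - 1) := by
  have h : ∀ t ∈ S, ∑ u ∈ S, (SimpleGraph.adjMatrix ℝ G) t u ≤ (S.card : ℝ) - 1 := by
    intro t ht
    have h1 : ∑ u ∈ S, (SimpleGraph.adjMatrix ℝ G) t u = ((S.filter (G.Adj t)).card : ℝ) := by
      simp only [SimpleGraph.adjMatrix_apply]
      rw [Finset.sum_boole]
    rw [h1]
    have h2 : S.filter (G.Adj t) ⊆ S.erase t := by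
      intro u hu
      simp only [Finset.mem_filter] at hu
      exact Finset.mem_erase.mpr ⟨fun he => G.loopless.irrefl t (he ▸ hu.2), hu.1⟩
    have h3 := Finset.card_le_card h2
    rw [Finset.card_erase_of_mem ht] at h3
    have h4 : 1 ≤ S.card := Finset.card_pos.mpr ⟨t, ht⟩
    have : ((S.filter (G.Adj t)).card : ℝ) ≤ (S.card : ℝ) - 1 := by
      have := Nat.cast_le (α := ℝ).mpr h3
      push_cast [Nat.cast_sub h4] at this ⊢
      linarith
    exact this
  calc ∑ t ∈ S, ∑ u ∈ S, (SimpleGraph.adjMatrix ℝ G) t u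
      ≤ ∑ t ∈ S, ((S.card : ℝ) - 1) := Finset.sum_le_sum h
    _ = S.card * (S.card - 1) := by rw [Finset.sum_const, nsmul_eq_mul]

private lemma cut_comb' {k : ℕ} (hreg : G.IsRegularOfDegree k) (S : Finset α)
    (h1 : 1 ≤ S.card) (h2 : S.card ≤ k) : (k : ℝ) ≤ cutEdges G S := by
  have hks := cut_ks' hreg S
  have hle := inS_le' (G := G) S
  have h1' : (1 : ℝ) ≤ S.card := by exact_mod_cast h1
  have h2' : (S.card : ℝ) ≤ k := by exact_mod_cast h2
  nlinarith [hks, hle]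

private lemma cut_compl' (S : Finset α) : cutEdges G Sᶜ = cutEdges G S := by
  rw [cutEdges, cutEdges]
  apply Finset.card_bij (fun p _ => (p.2, p.1))
  · rintro ⟨a, b⟩ hp
    simp only [Finset.mem_filter, Finset.mem_product, compl_compl] at hp ⊢
    exact ⟨⟨hp.1.2, hp.1.1⟩, hp.2.symm⟩
  · rintro ⟨a, b⟩ ha ⟨c, d⟩ hc h
    simpa [Prod.ext_iff, and_comm] using h
  · rintro ⟨a, b⟩ hp
    refine ⟨(b, a), ?_, rfl⟩
    simp only [Finset.mem_filter, Finset.mem_product, compl_compl] at hp ⊢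
    exact ⟨⟨hp.1.2, hp.1.1⟩, hp.2.symm⟩

end LargeCutsAux

theorem large_cuts
    {α : Type} [Fintype α] [DecidableEq α] (G : SimpleGraph α) [DecidableRel G.Adj]
    (k : ℕ) (hreg : G.IsRegularOfDegree k)
    (hlam : normEig G k 2 < 1 / 2)
    (hV : 4 / (1 - 2 * normEig G k 2) ≤ (Fintype.card α : ℝ))
    (S : Finset α) (hS : S ≠ ∅) (hS' : S ≠ Finset.univ) :
    k ≤ cutEdges G S := by
  rcases Nat.eq_zero_or_pos k with rfl | hk
  · exact Nat.zero_le _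
  classical
  have hkR : (0:ℝ) < k := by exact_mod_cast hk
  set n := Fintype.card α with hn
  set L := (eigsAsc G).getD (n - 2) 0 with hLdef
  have hlamL : normEig G k 2 = L / k := rfl
  rw [hlamL] at hlam hV
  have hLk2 : 2 * L < k := by
    rw [div_lt_iff₀ hkR] at hlam
    linarith
  have hLltk : L < k := by linarith
  have hs1 : 1 ≤ S.card := Finset.card_pos.mpr (Finset.nonempty_of_ne_empty hS)
  have hsn : S.card < n := by
    have : S ⊂ Finset.univ := Finset.ssubset_univ_iff.mpr hS'
    simpa [hn, Finset.card_univ] using Finset.card_lt_card this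
  have hsc : Sᶜ.card = n - S.card := by
    rw [Finset.card_compl, hn]
  by_cases hcase1 : S.card ≤ k
  · have := cut_comb' hreg S hs1 hcase1
    exact_mod_cast this
  by_cases hcase2 : Sᶜ.card ≤ k
  · have hsc1 : 1 ≤ Sᶜ.card := by omega
    have := cut_comb' hreg Sᶜ hsc1 hcase2
    rw [cut_compl'] at this
    exact_mod_cast this
  push_neg at hcase1 hcase2
  -- spectral case: both parts have more than k ≥ 1 vertices
  have hs2 : 2 ≤ S.card := by omega
  have hsc2 : 2 ≤ n - S.card := by omega
  have hn4 : 4 ≤ n := by omega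
  have hn2 : 2 ≤ n := by omega
  have hnR : (0:ℝ) < n := by positivity
  set s := S.card with hsdef
  have hsR2 : (2:ℝ) ≤ s := by exact_mod_cast hs2
  have hsnR : (s:ℝ) + 2 ≤ n := by exact_mod_cast (by omega : s + 2 ≤ n)
  have hnR4 : (4:ℝ) ≤ n := by exact_mod_cast hn4
  set A := SimpleGraph.adjMatrix ℝ G with hAdef
  set x : α → ℝ := fun t => (if t ∈ S then (1:ℝ) else 0) - (s:ℝ)/n with hxdef
  have hindsum : ∑ t, (if t ∈ S then (1:ℝ) else 0) = s := by
    rw [Finset.sum_ite_mem, Finset.univ_inter, Finset.sum_const, nsmul_eq_mul, mul_one]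
  have h0 : ∑ t, x t = 0 := by
    rw [hxdef]
    rw [Finset.sum_sub_distrib, hindsum, Finset.sum_const, nsmul_eq_mul]
    rw [Finset.card_univ, ← hn]
    field_simp; ring
  have hsq : ∑ t, x t ^ 2 = s - (s:ℝ)^2/n := by
    have hterm : ∀ t, x t ^ 2
        = (1 - 2*((s:ℝ)/n)) * (if t ∈ S then (1:ℝ) else 0) + ((s:ℝ)/n)^2 := by
      intro t
      by_cases h : t ∈ S <;> simp [hxdef, h] <;> ring
    rw [Finset.sum_congr rfl fun t _ => hterm t]
    rw [Finset.sum_add_distrib, ← Finset.mul_sum, hindsum, Finset.sum_const, nsmul_eq_mul]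
    rw [Finset.card_univ, ← hn]
    field_simp
    ring
  have hcolsum : ∀ u, ∑ t, A t u = k := by
    intro u
    have : ∀ t, A t u = A u t := fun t => by
      simp [hAdef, SimpleGraph.adjMatrix_apply, SimpleGraph.adj_comm]
    rw [Finset.sum_congr rfl fun t _ => this t]
    exact row_sum' hreg u
  have hAx : ∀ t, (A.mulVec x) t = (∑ u ∈ S, A t u) - ((s:ℝ)/n) * k := by
    intro t
    have h1 : (A.mulVec x) t = ∑ u, A t u * x u := by
      simp [Matrix.mulVec, dotProduct]
    rw [h1]
    have h2 : ∀ u, A t u * x u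
        = (if u ∈ S then A t u else 0) - ((s:ℝ)/n) * A t u := by
      intro u
      by_cases h : u ∈ S <;> simp [hxdef, h] <;> ring
    rw [Finset.sum_congr rfl fun u _ => h2 u]
    rw [Finset.sum_sub_distrib, Finset.sum_ite_mem, Finset.univ_inter, ← Finset.mul_sum]
    rw [row_sum' hreg t]
  have hquadval : ∑ t, x t * (A.mulVec x) t
      = (∑ t ∈ S, ∑ u ∈ S, A t u) - (k:ℝ) * (s:ℝ)^2/n := by
    have h1 : ∀ t, x t * (A.mulVec x) t
        = x t * (∑ u ∈ S, A t u) - ((s:ℝ)/n) * k * x t := by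
      intro t
      rw [hAx t]; ring
    rw [Finset.sum_congr rfl fun t _ => h1 t, Finset.sum_sub_distrib, ← Finset.mul_sum, h0,
      mul_zero, sub_zero]
    have h2 : ∀ t, x t * (∑ u ∈ S, A t u)
        = (if t ∈ S then (∑ u ∈ S, A t u) else 0) - ((s:ℝ)/n) * (∑ u ∈ S, A t u) := by
      intro t
      by_cases h : t ∈ S <;> simp [hxdef, h] <;> ring
    rw [Finset.sum_congr rfl fun t _ => h2 t, Finset.sum_sub_distrib, Finset.sum_ite_mem,
      Finset.univ_inter, ← Finset.mul_sum]
    have h3 : ∑ t, ∑ u ∈ S, A t u = (k:ℝ) * s := by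
      rw [show ∑ t, ∑ u ∈ S, A t u = ∑ u ∈ S, ∑ t, A t u from Finset.sum_comm]
      rw [Finset.sum_congr rfl fun u _ => hcolsum u]
      rw [Finset.sum_const, nsmul_eq_mul]
      ring
    rw [h3]
    ring
  have hray := rayleigh_aux' hreg hn2 hLltk (eig_filter_card_le_one' G hn2) x h0
  rw [hquadval, hsq] at hray
  have hks := cut_ks' hreg S
  rw [← hAdef, ← hsdef] at hks
  -- cut ≥ (k - L) * (s - s²/n)
  have hcut1 : ((k:ℝ) - L) * ((s:ℝ) - (s:ℝ)^2/n) ≤ (cutEdges G S : ℝ) := by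
    rw [hks]
    linear_combination hray
  -- (k - L) * s * (n - s) ≥ k * n
  have hprod : ((s:ℝ) - 2) * ((n:ℝ) - (s:ℝ) - 2) ≥ 0 :=
    mul_nonneg (by linarith) (by linarith)
  have h4k : 4 * (k:ℝ) ≤ (n:ℝ) * k - 2 * (n:ℝ) * L := by
    have h1mul : 0 < 1 - 2 * (L / k) := by
      rw [sub_pos, ← sub_pos]
      have : (k - 2*L)/k > 0 := div_pos (by linarith) hkR
      have h2 : 1 - 2*(L/k) = (k - 2*L)/k := by field_simp
      rw [h2]; linarith
    rw [div_le_iff₀ h1mul] at hV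
    have := mul_le_mul_of_nonneg_right hV (le_of_lt hkR)
    calc 4 * (k:ℝ) = 4 * k := by ring
      _ ≤ ((n:ℝ) * (1 - 2 * (L / k))) * k := this
      _ = (n:ℝ) * k - 2 * (n:ℝ) * L := by field_simp
  have hclaimA : (k:ℝ) * n ≤ ((k:ℝ) - L) * ((s:ℝ) * ((n:ℝ) - s)) := by
    have hkL : (0:ℝ) ≤ (k:ℝ) - L := by linarith
    have hint := mul_nonneg hkL hprod
    rcases le_or_gt 0 L with hLpos | hLneg
    · linarith [hint, h4k]
    · have hint2 : (0:ℝ) ≤ ((n:ℝ) - 4) * k := mul_nonneg (by linarith) hkR.le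
      have hint3 : (0:ℝ) ≤ (-L) * (2*(n:ℝ) - 4) := mul_nonneg (by linarith) (by linarith)
      linarith [hint, hint2, hint3]
  have hfin : (k:ℝ) ≤ (cutEdges G S : ℝ) := by
    have heq : (s:ℝ) - (s:ℝ)^2/n = ((s:ℝ) * ((n:ℝ) - s))/n := by field_simp
    rw [heq] at hcut1
    have h5 : ((k:ℝ)*n)/n ≤ (((k:ℝ) - L) * ((s:ℝ) * ((n:ℝ) - s)))/n :=
      (div_le_div_iff_of_pos_right hnR).mpr hclaimA
    have h6 : ((k:ℝ)*n)/n = (k:ℝ) := by field_simp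
    have h7 : (((k:ℝ) - L) * ((s:ℝ) * ((n:ℝ) - s)))/n
        = ((k:ℝ) - L) * (((s:ℝ) * ((n:ℝ) - s))/n) := by ring
    linarith [hcut1, h5]
  exact_mod_cast hfin
end

section
/- Let X=(V,E,T) be a 2-dimensional (k0,k1)-regular simplicial complex whose underlying graph G₀(X) has normalized second largest adjacency eigenvalue λ̃₂ < 1/2 and |V| ≥ 4/(1−2λ̃₂). Then for every subset of edges ∅ ≠ F ⊊ E and every vertex v ∈ V, the distance of the local view F_v from the 1-coboundaries satisfies dist(F_v, B¹(X)) = min{|F_v|, k₀ − |F_v|}. -/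
open Finset

section Aux
open Matrix
set_option linter.unusedSectionVars false

variable {V : Type} [Fintype V] [DecidableEq V]

lemma euclid_inner (z w : EuclideanSpace ℝ V) : @inner ℝ _ _ z w = ∑ i, z i * w i := by
  simp [PiLp.inner_apply, RCLike.inner_apply, mul_comm]

lemma herm_swap (A : Matrix V V ℝ) (hA : A.IsHermitian) (u w : V → ℝ) :
    ∑ j, u j * (A *ᵥ w) j = (A *ᵥ u) ⬝ᵥ w := by
  have : ∑ j, u j * (A *ᵥ w) j = u ⬝ᵥ (A *ᵥ w) := rfl
  rw [this, Matrix.dotProduct_mulVec, ← Matrix.mulVec_transpose,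
    ← Matrix.conjTranspose_eq_transpose_of_trivial, hA.eq]

lemma quad_bound (A : Matrix V V ℝ) (hA : A.IsHermitian) (μ k : ℝ)
    (hcard : (univ.filter (fun i => μ < hA.eigenvalues i)).card ≤ 1)
    (hconst : A *ᵥ (fun _ => (1:ℝ)) = k • (fun _ => (1:ℝ)))
    (hμk : μ < k) (hn : 0 < Fintype.card V)
    (y : V → ℝ) (hy : ∑ v, y v = 0) :
    y ⬝ᵥ (A *ᵥ y) ≤ μ * ∑ v, y v ^ 2 := by
  classical
  set b := hA.eigenvectorBasis with hb
  set lam := hA.eigenvalues with hlam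
  have hrepr : ∀ (z : EuclideanSpace ℝ V) (i : V),
      b.repr (WithLp.toLp 2 (A *ᵥ z)) i = lam i * b.repr z i := by
    intro z i
    rw [b.repr_apply_apply, b.repr_apply_apply, euclid_inner, euclid_inner,
      herm_swap A hA]
    have key : Matrix.mulVec A (hA.eigenvectorBasis i) =
        fun w => hA.eigenvalues i * hA.eigenvectorBasis i w := hA.mulVec_eigenvectorBasis i
    rw [hb, key]
    simp [hlam, smul_dotProduct, dotProduct, mul_assoc, Finset.mul_sum]
  -- the constant vector
  set o : EuclideanSpace ℝ V := WithLp.toLp 2 (fun _ => (1:ℝ)) with ho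
  have honez : o ≠ 0 := by
    intro h
    have : (1:ℝ) = 0 := by
      have ⟨v⟩ := Fintype.card_pos_iff.mp hn
      exact congrFun (congrArg WithLp.ofLp h) v
    norm_num at this
  have hoeig : ∀ i, lam i * b.repr o i = k * b.repr o i := by
    intro i
    have h1 := hrepr o i
    rw [show (A *ᵥ o) = k • o from hconst] at h1
    rw [show b.repr (WithLp.toLp 2 (k • o)) = k • b.repr o from
      map_smul b.repr k o] at h1
    simpa using h1.symm
  obtain ⟨j, hj⟩ : ∃ j, b.repr o j ≠ 0 := by
    by_contra h
    push_neg at h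
    apply honez
    have : b.repr o = 0 := by ext i; exact h i
    simpa using congrArg b.repr.symm this
  have hjk : lam j = k := by
    have := hoeig j
    exact mul_right_cancel₀ hj this
  have hle : ∀ i, i ≠ j → lam i ≤ μ := by
    intro i hij
    by_contra h
    push_neg at h
    have h2 : ({i, j} : Finset V) ⊆ univ.filter (fun i => μ < lam i) := by
      intro x hx
      simp only [mem_insert, mem_singleton] at hx
      rcases hx with rfl | rfl <;> simp only [mem_filter, mem_univ, true_and]
      · exact h
      · rw [hjk]; exact hμk
    have := card_le_card h2
    rw [card_insert_of_notMem (by simp [hij]), card_singleton] at this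
    omega
  -- orthogonality: coefficient at j vanishes
  set yE : EuclideanSpace ℝ V := WithLp.toLp 2 y with hyE
  have hinner : @inner ℝ _ _ o yE = 0 := by
    rw [euclid_inner]; simpa [ho] using hy
  have hoz : ∀ i, i ≠ j → b.repr o i = 0 := by
    intro i hij
    have := hoeig i
    have hne : lam i ≠ k := by
      have := hle i hij; linarith
    rcases mul_eq_mul_right_iff.mp this with h | h
    · exact absurd h hne
    · exact h
  have hcj : b.repr yE j = 0 := by
    have h1 : @inner ℝ _ _ (b.repr o) (b.repr yE) = 0 := by
      rw [b.repr.inner_map_map]; exact hinner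
    rw [euclid_inner] at h1
    have h2 : ∑ i, b.repr o i * b.repr yE i = b.repr o j * b.repr yE j := by
      rw [Finset.sum_eq_single j]
      · intro i _ hij; rw [hoz i hij, zero_mul]
      · intro h; exact absurd (mem_univ j) h
    rw [h2] at h1
    rcases mul_eq_zero.mp h1 with h | h
    · exact absurd h hj
    · exact h
  -- main computation
  have hform : y ⬝ᵥ (A *ᵥ y) = ∑ i, lam i * (b.repr yE i)^2 := by
    have h1 : y ⬝ᵥ (A *ᵥ y) = @inner ℝ _ _ yE (WithLp.toLp 2 (A *ᵥ y)) := by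
      rw [euclid_inner]; rfl
    rw [h1, ← b.repr.inner_map_map, euclid_inner]
    apply Finset.sum_congr rfl
    intro i _
    rw [hrepr yE i]; ring
  have hnorm : ∑ v, y v ^ 2 = ∑ i, (b.repr yE i)^2 := by
    have h1 : ∑ v, y v ^ 2 = @inner ℝ _ _ yE yE := by
      rw [euclid_inner]; apply Finset.sum_congr rfl; intro i _; ring
    rw [h1, ← b.repr.inner_map_map, euclid_inner]
    apply Finset.sum_congr rfl; intro i _; ring
  rw [hform, hnorm, Finset.mul_sum]
  apply Finset.sum_le_sum
  intro i _
  by_cases hij : i = j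
  · subst hij; rw [hcj]; simp
  · have := hle i hij
    have h2 : (0:ℝ) ≤ (b.repr yE i)^2 := sq_nonneg _
    nlinarith

lemma sorted_filter_le (L : List ℝ) (hL : L.Pairwise (· ≤ ·)) (h2 : 2 ≤ L.length) :
    (L.filter (fun x => decide (L.getD (L.length - 2) 0 < x))).length ≤ 1 := by
  set n := L.length with hn
  set μ := L.getD (n-2) 0 with hμ
  set p : ℝ → Bool := fun x => decide (μ < x) with hp
  have hmem : ∀ x ∈ L.take (n-1), p x = false := by
    intro x hx
    rw [List.mem_take_iff_getElem] at hx
    obtain ⟨i, hi, hgx⟩ := hx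
    have hi2 : i < n - 1 := lt_of_lt_of_le hi (min_le_left _ _)
    have hin : i < n := by omega
    have hle : L[i] ≤ L[n-2] := by
      rcases eq_or_lt_of_le (show i ≤ n - 2 by omega) with h | h
      · subst h; exact le_refl _
      · exact List.pairwise_iff_getElem.mp hL i (n-2) hin (by omega) h
    have : ¬ (μ < x) := by
      rw [← hgx, hμ, List.getD_eq_getElem L 0 (show n - 2 < L.length by omega)]
      exact not_lt.mpr hle
    simpa [hp] using this
  have hsplit : L.filter p = (L.take (n-1)).filter p ++ (L.drop (n-1)).filter p := by
    conv_lhs => rw [← List.take_append_drop (n-1) L]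
    rw [List.filter_append]
  rw [hsplit, List.length_append]
  have h1 : ((L.take (n-1)).filter p).length = 0 := by
    rw [List.length_eq_zero_iff, List.filter_eq_nil_iff]
    intro a ha
    simp [hmem a ha]
  have hd : ((L.drop (n-1)).filter p).length ≤ (L.drop (n-1)).length :=
    List.length_filter_le _ _
  rw [List.length_drop] at hd
  omega


lemma eig_filter_card_le {α : Type} [Fintype α] [DecidableEq α] (G : SimpleGraph α)
    [DecidableRel G.Adj] (h2 : 2 ≤ Fintype.card α) :
    (univ.filter (fun i =>
        (eigsAsc G).getD (Fintype.card α - 2) 0 < (adjMatrix_isHermitian G).eigenvalues i)).card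
      ≤ 1 := by
  classical
  set eig := (adjMatrix_isHermitian G).eigenvalues with heig
  set L := eigsAsc G with hL
  have hlen : L.length = Fintype.card α := by
    rw [hL, eigsAsc, Multiset.length_sort, Multiset.card_map, ← Finset.card_def, Finset.card_univ]
  have hsorted : L.Pairwise (· ≤ ·) := Multiset.pairwise_sort _ _
  set μ := L.getD (Fintype.card α - 2) 0 with hμ
  have key := sorted_filter_le L hsorted (by omega)
  rw [hlen] at key
  -- convert finset filter card to list filter length
  have hcoe : (L : Multiset ℝ) = (Finset.univ : Finset α).val.map eig := by
    rw [hL, eigsAsc, Multiset.sort_eq]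
  have hcount : (univ.filter (fun i => μ < eig i)).card
      = (L.filter (fun x => decide (μ < x))).length := by
    have h3 : (List.filter (fun x => decide (μ < x)) L).length
        = Multiset.card (Multiset.filter (fun x => μ < x) (↑L : Multiset ℝ)) := by
      rw [Multiset.filter_coe, Multiset.coe_card]
    rw [h3, hcoe, Multiset.filter_map, Multiset.card_map]
    rfl
  rw [hcount]
  exact key

variable {V : Type} [Fintype V] [DecidableEq V] (E : Finset (Finset V))

lemma adj_row_card (hE2 : ∀ e ∈ E, e.card = 2) (v : V) :
    (univ.filter (fun w => (G0 E).Adj v w)).card = (E.filter (fun e => v ∈ e)).card := by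
  classical
  apply Finset.card_bij (fun w _ => ({v, w} : Finset V))
  · intro w hw
    simp only [mem_filter, mem_univ, true_and] at hw ⊢
    exact ⟨hw.2, by simp⟩
  · intro w₁ h₁ w₂ h₂ heq
    simp only [mem_filter, mem_univ, true_and] at h₁ h₂
    have : w₁ ∈ ({v, w₂} : Finset V) := heq ▸ (by simp : w₁ ∈ ({v, w₁} : Finset V))
    simp only [mem_insert, mem_singleton] at this
    rcases this with h | h
    · exact absurd h.symm h₁.1
    · exact h
  · intro e he
    simp only [mem_filter] at he
    obtain ⟨heE, hve⟩ := he
    obtain ⟨a, b, hab, hfe⟩ := Finset.card_eq_two.mp (hE2 e heE)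
    subst hfe
    simp only [mem_insert, mem_singleton] at hve
    rcases hve with rfl | rfl
    · refine ⟨b, ?_, rfl⟩
      simp only [mem_filter, mem_univ, true_and]
      exact ⟨hab, heE⟩
    · refine ⟨a, ?_, by rw [Finset.pair_comm]⟩
      simp only [mem_filter, mem_univ, true_and]
      exact ⟨Ne.symm hab, by rw [Finset.pair_comm]; exact heE⟩

lemma delta0_card_eq (hE2 : ∀ e ∈ E, e.card = 2) (S : Finset V) :
    ((S ×ˢ Sᶜ).filter (fun p => (G0 E).Adj p.1 p.2)).card = (delta0 E S).card := by
  classical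
  apply Finset.card_bij (fun p _ => ({p.1, p.2} : Finset V))
  · intro p hp
    simp only [mem_filter, mem_product, mem_compl] at hp
    obtain ⟨⟨h1, h2⟩, hne, hE⟩ := hp
    simp only [delta0, mem_filter]
    refine ⟨hE, ?_⟩
    have : ({p.1, p.2} : Finset V) ∩ S = {p.1} := by
      ext x
      simp only [mem_inter, mem_insert, mem_singleton]
      constructor
      · rintro ⟨h | h, hxS⟩
        · exact h
        · exact absurd (h ▸ hxS) h2
      · rintro rfl; exact ⟨Or.inl rfl, h1⟩
    rw [this, card_singleton]
  · intro p hp q hq heq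
    simp only [mem_filter, mem_product, mem_compl] at hp hq
    obtain ⟨⟨hp1, hp2⟩, -, -⟩ := hp
    obtain ⟨⟨hq1, hq2⟩, -, -⟩ := hq
    have h1 : p.1 ∈ ({q.1, q.2} : Finset V) := heq ▸ (by simp : p.1 ∈ ({p.1, p.2} : Finset V))
    simp only [mem_insert, mem_singleton] at h1
    have hp1q1 : p.1 = q.1 := by
      rcases h1 with h | h
      · exact h
      · exact absurd (h ▸ hp1) hq2
    have h2 : p.2 ∈ ({q.1, q.2} : Finset V) := heq ▸ (by simp : p.2 ∈ ({p.1, p.2} : Finset V))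
    simp only [mem_insert, mem_singleton] at h2
    have hp2q2 : p.2 = q.2 := by
      rcases h2 with h | h
      · exact absurd (h ▸ hq1) hp2
      · exact h
    exact Prod.ext hp1q1 hp2q2
  · intro e he
    simp only [delta0, mem_filter] at he
    obtain ⟨heE, hcard⟩ := he
    obtain ⟨a, b, hab, rfl⟩ := Finset.card_eq_two.mp (hE2 e heE)
    have hone : (({a, b} : Finset V) ∩ S).card = 1 := hcard
    -- exactly one of a, b is in S
    by_cases ha : a ∈ S
    · have hb : b ∉ S := by
        intro hb
        have : ({a, b} : Finset V) ∩ S = {a, b} := by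
          rw [Finset.inter_eq_left]
          intro x hx
          simp only [mem_insert, mem_singleton] at hx
          rcases hx with rfl | rfl <;> assumption
        rw [this, Finset.card_insert_of_notMem (by simpa using hab), card_singleton] at hone
        omega
      refine ⟨(a, b), ?_, rfl⟩
      simp only [mem_filter, mem_product, mem_compl]
      exact ⟨⟨ha, hb⟩, hab, heE⟩
    · have hb : b ∈ S := by
        by_contra hb
        have : ({a, b} : Finset V) ∩ S = ∅ := by
          rw [Finset.eq_empty_iff_forall_notMem]
          intro x hx
          simp only [mem_inter, mem_insert, mem_singleton] at hx
          rcases hx.1 with rfl | rfl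
          · exact ha hx.2
          · exact hb hx.2
        rw [this] at hone
        simp at hone
      refine ⟨(b, a), ?_, by rw [Finset.pair_comm]⟩
      simp only [mem_filter, mem_product, mem_compl]
      exact ⟨⟨hb, ha⟩, Ne.symm hab, by rw [Finset.pair_comm]; exact heE⟩

lemma prod_filter_card (S t : Finset V) :
    ((S ×ˢ t).filter (fun p => (G0 E).Adj p.1 p.2)).card
      = ∑ u ∈ S, (t.filter (fun w => (G0 E).Adj u w)).card := by
  classical
  rw [Finset.card_eq_sum_card_fiberwise
    (f := Prod.fst) (t := S) (by intro p hp; exact (mem_product.mp (mem_filter.mp hp).1).1)]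
  apply Finset.sum_congr rfl
  intro u hu
  apply Finset.card_bij (fun p _ => p.2)
  · intro p hp
    simp only [mem_filter, mem_product] at hp ⊢
    obtain ⟨⟨⟨-, h2⟩, hadj⟩, hfst⟩ := hp
    exact ⟨h2, hfst ▸ hadj⟩
  · intro p hp q hq heq
    simp only [mem_filter, mem_product] at hp hq
    exact Prod.ext (hp.2.trans hq.2.symm) heq
  · intro w hw
    simp only [mem_filter] at hw
    exact ⟨(u, w), by simp only [mem_filter, mem_product]; exact ⟨⟨⟨hu, hw.1⟩, hw.2⟩, trivial⟩, rfl⟩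

lemma delta0_compl (hE2 : ∀ e ∈ E, e.card = 2) (S : Finset V) :
    delta0 E S = delta0 E Sᶜ := by
  classical
  apply Finset.filter_congr
  intro e he
  have hsum : (e ∩ S).card + (e ∩ Sᶜ).card = 2 := by
    rw [← Finset.filter_mem_eq_inter, ← Finset.filter_mem_eq_inter]
    have : (e.filter (· ∈ Sᶜ)) = e.filter (fun x => ¬ x ∈ S) := by
      apply Finset.filter_congr; intro x _; simp
    rw [this, Finset.card_filter_add_card_filter_not, hE2 e he]
  omega

lemma row_split (S : Finset V) (u : V) :
    (S.filter (fun w => (G0 E).Adj u w)).card + (Sᶜ.filter (fun w => (G0 E).Adj u w)).card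
      = (univ.filter (fun w => (G0 E).Adj u w)).card := by
  classical
  rw [← Finset.card_union_of_disjoint
    (Finset.disjoint_filter_filter (disjoint_compl_right)),
    ← Finset.filter_union, Finset.union_compl]

lemma pss_le (S : Finset V) :
    ((S ×ˢ S).filter (fun p => (G0 E).Adj p.1 p.2)).card ≤ S.card * S.card - S.card := by
  classical
  rw [← Finset.offDiag_card]
  apply Finset.card_le_card
  intro p hp
  simp only [mem_filter, mem_product] at hp
  simp only [Finset.mem_offDiag]
  exact ⟨hp.1.1, hp.1.2, hp.2.1⟩

lemma adj_mulVec_one (k₀ : ℕ)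
    (hk : ∀ v : V, (univ.filter (fun w => (G0 E).Adj v w)).card = k₀) :
    (SimpleGraph.adjMatrix ℝ (G0 E)) *ᵥ (fun _ => (1:ℝ)) = (k₀ : ℝ) • (fun _ => (1:ℝ)) := by
  classical
  funext v
  simp only [Matrix.mulVec, dotProduct, SimpleGraph.adjMatrix_apply, mul_one,
    Pi.smul_apply, smul_eq_mul]
  rw [← hk v, Finset.card_filter]
  push_cast
  rfl

lemma quadform_eq (S : Finset V) :
    (fun v => if v ∈ S then (1:ℝ) else 0) ⬝ᵥ
        ((SimpleGraph.adjMatrix ℝ (G0 E)) *ᵥ (fun v => if v ∈ S then (1:ℝ) else 0))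
      = (((S ×ˢ S).filter (fun p => (G0 E).Adj p.1 p.2)).card : ℝ) := by
  classical
  have hind : ∀ (g : V → ℝ), ∑ u, (if u ∈ S then (1:ℝ) else 0) * g u = ∑ u ∈ S, g u := by
    intro g
    simp only [ite_mul, one_mul, zero_mul]
    rw [← Finset.sum_filter]
    simp [Finset.filter_mem_eq_inter]
  have hrhs : (((S ×ˢ S).filter (fun p => (G0 E).Adj p.1 p.2)).card : ℝ)
      = ∑ u ∈ S, ∑ w ∈ S, (if (G0 E).Adj u w then (1:ℝ) else 0) := by
    rw [prod_filter_card]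
    push_cast
    apply Finset.sum_congr rfl
    intro u _
    rw [Finset.card_filter]
    push_cast
    rfl
  rw [hrhs]
  show ∑ u, (if u ∈ S then (1:ℝ) else 0) *
      (∑ w, SimpleGraph.adjMatrix ℝ (G0 E) u w * (if w ∈ S then (1:ℝ) else 0)) = _
  rw [hind]
  apply Finset.sum_congr rfl
  intro u _
  have : ∀ w, SimpleGraph.adjMatrix ℝ (G0 E) u w * (if w ∈ S then (1:ℝ) else 0)
      = (if w ∈ S then (1:ℝ) else 0) * (if (G0 E).Adj u w then (1:ℝ) else 0) := by
    intro w
    simp only [SimpleGraph.adjMatrix_apply]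
    rcases Classical.em (w ∈ S) with h | h <;> rcases Classical.em ((G0 E).Adj u w) with h2 | h2 <;>
      simp [h, h2]
  rw [Finset.sum_congr rfl (fun w _ => this w), hind]

lemma real_cut_arith (N sR K M Q C : ℝ)
    (hq : N^2 * Q - 2 * N * sR * (K * sR) + sR^2 * (K * N)
      ≤ M * (N^2 * sR - 2 * N * sR * sR + sR^2 * N))
    (hsum : Q + C = sR * K)
    (h2s : 2 * sR ≤ N) (hs2 : 2 ≤ sR) (hk1 : 1 ≤ K) (hμk : M < K / 2)
    (hns : 4 * K ≤ N * (K - 2 * M)) : K ≤ C := by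
  have hNpos : (0:ℝ) < N := by linarith
  have hfact1 : (2:ℝ) * N - 4 ≤ sR * (N - sR) := by
    nlinarith [mul_nonneg (show (0:ℝ) ≤ sR - 2 by linarith)
      (show (0:ℝ) ≤ N - sR - 2 by linarith)]
  have hK0 : (0:ℝ) ≤ K := by linarith
  have hNK : N * K + 4 * K ≤ 2 * N * (K - M) := by linarith
  have hsNpos : (0:ℝ) ≤ sR * (N - sR) := mul_nonneg (by linarith) (by linarith)
  have hmain : N * (N * K) ≤ N * (sR * (N - sR) * (K - M)) := by
    have c1 : sR * (N - sR) * (N * K + 4 * K) ≤ sR * (N - sR) * (2 * N * (K - M)) :=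
      mul_le_mul_of_nonneg_left hNK hsNpos
    have c2 : (2 * N - 4) * (N * K + 4 * K) ≤ sR * (N - sR) * (N * K + 4 * K) := by
      apply mul_le_mul_of_nonneg_right hfact1
      have h1 : (0:ℝ) ≤ N * K := mul_nonneg (by linarith) hK0
      linarith
    have c3 : 2 * N * (N * K) ≤ (2 * N - 4) * (N * K + 4 * K) := by
      nlinarith [mul_nonneg hK0 (show (0:ℝ) ≤ N - 4 by linarith)]
    nlinarith [c1, c2, c3]
  nlinarith [hmain, mul_pos hNpos hNpos, hq, hsum]

lemma cut_lower (k₀ : ℕ) (hE2 : ∀ e ∈ E, e.card = 2)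
    (hk : ∀ v : V, (univ.filter (fun w => (G0 E).Adj v w)).card = k₀)
    (μ : ℝ)
    (hquad : ∀ y : V → ℝ, ∑ v, y v = 0 →
      y ⬝ᵥ ((SimpleGraph.adjMatrix ℝ (G0 E)) *ᵥ y) ≤ μ * ∑ v, y v ^ 2)
    (hμk : μ < (k₀ : ℝ) / 2) (hk0 : 1 ≤ k₀)
    (hns : 4 * (k₀ : ℝ) ≤ (Fintype.card V : ℝ) * ((k₀ : ℝ) - 2 * μ))
    (S : Finset V) (hS0 : S.Nonempty) (h2s : 2 * S.card ≤ Fintype.card V) :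
    k₀ ≤ ((S ×ˢ Sᶜ).filter (fun p => (G0 E).Adj p.1 p.2)).card := by
  classical
  set n := Fintype.card V with hn
  set s := S.card with hs
  set PSS := ((S ×ˢ S).filter (fun p => (G0 E).Adj p.1 p.2)).card with hPSS
  set PSC := ((S ×ˢ Sᶜ).filter (fun p => (G0 E).Adj p.1 p.2)).card with hPSC
  have hsplit : PSS + PSC = s * k₀ := by
    rw [hPSS, hPSC, prod_filter_card, prod_filter_card, ← Finset.sum_add_distrib]
    rw [Finset.sum_congr rfl (fun u _ => by rw [row_split E S u, hk u])]
    simp [hs, mul_comm]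
  have hs1 : 1 ≤ s := Finset.card_pos.mpr hS0
  rcases le_or_gt s k₀ with hcase | hcase
  · -- combinatorial case
    have hbound : PSS ≤ s * s - s := pss_le E S
    have h1 : PSS + s ≤ s * s := by
      have : s ≤ s * s := Nat.le_mul_of_pos_left s (by omega)
      omega
    -- k₀ + s*s ≤ k₀*s + s
    have h2 : (k₀:ℤ) + s * s ≤ k₀ * s + s := by
      nlinarith [(show (1:ℤ) ≤ (s:ℤ) by exact_mod_cast hs1),
        (show (s:ℤ) ≤ (k₀:ℤ) by exact_mod_cast hcase)]
    have hz : (k₀:ℤ) ≤ (PSC:ℤ) := by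
      have e1 : (PSS:ℤ) + PSC = s * k₀ := by exact_mod_cast hsplit
      have e2 : (PSS:ℤ) + s ≤ s * s := by exact_mod_cast h1
      nlinarith
    exact_mod_cast hz
  · -- spectral case
    have hs2 : 2 ≤ s := by omega
    have hn4 : 4 ≤ n := by omega
    set A := SimpleGraph.adjMatrix ℝ (G0 E) with hA
    set x : V → ℝ := fun v => if v ∈ S then (1:ℝ) else 0 with hx
    set o : V → ℝ := fun _ => (1:ℝ) with ho
    have hA1 : A *ᵥ o = (k₀:ℝ) • o := adj_mulVec_one E k₀ hk
    have hox : o ⬝ᵥ x = (s : ℝ) := by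
      simp only [dotProduct, ho, hx, one_mul]
      rw [Finset.sum_boole]
      congr 1
      rw [Finset.filter_mem_eq_inter, Finset.univ_inter]
    have hxo : x ⬝ᵥ o = (s : ℝ) := by
      rw [← hox, dotProduct_comm]
    have hxx : x ⬝ᵥ x = (s : ℝ) := by
      simp only [dotProduct, hx]
      rw [Finset.sum_congr rfl (fun v _ => by
        rcases Classical.em (v ∈ S) with h | h <;> simp [h] :
          ∀ v ∈ univ, (if v ∈ S then (1:ℝ) else 0) * (if v ∈ S then (1:ℝ) else 0)
            = if v ∈ S then (1:ℝ) else 0)]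
      rw [Finset.sum_boole]
      congr 1
      rw [Finset.filter_mem_eq_inter, Finset.univ_inter]
    have hoo : o ⬝ᵥ o = (n : ℝ) := by
      simp [dotProduct, ho, hn]
    have hQ : x ⬝ᵥ (A *ᵥ x) = (PSS : ℝ) := quadform_eq E S
    have hoAx : o ⬝ᵥ (A *ᵥ x) = (k₀ : ℝ) * s := by
      have h1 : ∑ j, o j * (A *ᵥ x) j = (A *ᵥ o) ⬝ᵥ x :=
        herm_swap A (adjMatrix_isHermitian _) o x
      have h2 : o ⬝ᵥ (A *ᵥ x) = ∑ j, o j * (A *ᵥ x) j := rfl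
      rw [h2, h1, hA1, smul_dotProduct, hox, smul_eq_mul]
    have hxAo : x ⬝ᵥ (A *ᵥ o) = (k₀ : ℝ) * s := by
      rw [hA1, dotProduct_smul, hxo, smul_eq_mul]
    set y : V → ℝ := (n:ℝ) • x - (s:ℝ) • o with hy
    have hsumy : ∑ v, y v = 0 := by
      simp only [hy, Pi.sub_apply, Pi.smul_apply, smul_eq_mul]
      rw [Finset.sum_sub_distrib, ← Finset.mul_sum, ← Finset.mul_sum]
      have h1 : ∑ v, x v = (s:ℝ) := by
        rw [← hox]; simp [dotProduct, ho]
      have h2 : ∑ v : V, o v = (n:ℝ) := by simp [ho, hn]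
      rw [h1, h2]; ring
    have hyAy : y ⬝ᵥ (A *ᵥ y)
        = (n:ℝ)^2 * PSS - 2 * n * s * (k₀ * s) + (s:ℝ)^2 * (k₀ * n) := by
      rw [hy, Matrix.mulVec_sub, Matrix.mulVec_smul, Matrix.mulVec_smul,
        sub_dotProduct, smul_dotProduct, smul_dotProduct,
        dotProduct_sub, dotProduct_sub,
        dotProduct_smul, dotProduct_smul, dotProduct_smul,
        dotProduct_smul, hQ, hoAx, hxAo]
      have hoAo : o ⬝ᵥ (A *ᵥ o) = (k₀:ℝ) * n := by
        rw [hA1, dotProduct_smul, hoo, smul_eq_mul]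
      rw [hoAo]
      simp only [smul_eq_mul]
      ring
    have hyy : ∑ v, y v ^ 2 = (n:ℝ)^2 * s - 2 * n * s * s + (s:ℝ)^2 * n := by
      have hdot : ∑ v, y v ^ 2 = y ⬝ᵥ y := by
        simp [dotProduct, sq]
      rw [hdot, hy, sub_dotProduct, smul_dotProduct, smul_dotProduct,
        dotProduct_sub, dotProduct_sub, dotProduct_smul,
        dotProduct_smul, dotProduct_smul, dotProduct_smul,
        hxx, hxo, hox, hoo]
      simp only [smul_eq_mul]
      ring
    have hq := hquad y hsumy
    rw [hyAy, hyy] at hq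
    -- now pure real arithmetic
    have hcast : (PSS : ℝ) + (PSC : ℝ) = (s:ℝ) * k₀ := by
      exact_mod_cast congrArg (Nat.cast : ℕ → ℝ) hsplit
    have hsn : (2:ℝ) * s ≤ (n:ℝ) := by exact_mod_cast h2s
    have hs2R : (2:ℝ) ≤ (s:ℝ) := by exact_mod_cast hs2
    have hn4R : (4:ℝ) ≤ (n:ℝ) := by exact_mod_cast hn4
    have hk0R : (1:ℝ) ≤ (k₀:ℝ) := by exact_mod_cast hk0
    suffices h : (k₀:ℝ) ≤ (PSC : ℝ) by exact_mod_cast h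
    exact real_cut_arith (n:ℝ) (s:ℝ) (k₀:ℝ) μ (PSS:ℝ) (PSC:ℝ) hq hcast hsn hs2R hk0R hμk hns

end Aux

theorem dist_of_local_view_from_coboundaries
    {V : Type} [Fintype V] [DecidableEq V] (E T : Finset (Finset V))
    (k₀ k₁ : ℕ) (hX : IsComplex E T) (hreg : IsRegularComplex E T k₀ k₁)
    (hlam : normEig (G0 E) k₀ 2 < 1 / 2)
    (hV : 4 / (1 - 2 * normEig (G0 E) k₀ 2) ≤ (Fintype.card V : ℝ))
    (F : Finset (Finset V)) (hF : F ⊆ E) (hF0 : F ≠ ∅) (hFE : F ≠ E) (v : V) :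
    famDist (localView F v) (B1 E) =
      min (localView F v).card (k₀ - (localView F v).card) := by
  classical
  obtain ⟨hE2, -, -⟩ := hX
  obtain ⟨hk0sets, -⟩ := hreg
  set Fv := localView F v with hFv
  set m := Fv.card with hm
  have hFvsub : Fv ⊆ E.filter (fun e => v ∈ e) := by
    intro e he
    rw [hFv, localView, Finset.mem_filter] at he
    exact Finset.mem_filter.mpr ⟨hF he.1, he.2⟩
  have hmk : m ≤ k₀ := by
    rw [hm, ← hk0sets v]; exact Finset.card_le_card hFvsub
  obtain ⟨e₀, he₀F⟩ := Finset.nonempty_iff_ne_empty.mpr hF0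
  have he₀E : e₀ ∈ E := hF he₀F
  have hk01 : 1 ≤ k₀ := by
    obtain ⟨u₀, w₀, hu₀w₀, he₀⟩ := Finset.card_eq_two.mp (hE2 e₀ he₀E)
    rw [← hk0sets u₀]
    apply Finset.card_pos.mpr
    exact ⟨e₀, Finset.mem_filter.mpr ⟨he₀E, by rw [he₀]; simp⟩⟩
  have hk0R : (0:ℝ) < (k₀:ℝ) := by exact_mod_cast hk01
  have hn2 : 2 ≤ Fintype.card V := by
    calc 2 = e₀.card := (hE2 e₀ he₀E).symm
    _ ≤ (univ : Finset V).card := Finset.card_le_card (Finset.subset_univ _)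
    _ = Fintype.card V := Finset.card_univ
  set μ0 := (eigsAsc (G0 E)).getD (Fintype.card V - 2) 0 with hμ0
  have hν : normEig (G0 E) k₀ 2 = μ0 / k₀ := rfl
  rw [hν] at hlam hV
  have hμhalf : μ0 < (k₀:ℝ)/2 := by
    have := (div_lt_div_iff₀ hk0R (by norm_num : (0:ℝ) < 2)).mp hlam
    linarith
  have hdenpos : (0:ℝ) < 1 - 2*(μ0/k₀) := by
    have : μ0/k₀ < 1/2 := hlam
    linarith
  have hns : 4 * (k₀:ℝ) ≤ (Fintype.card V : ℝ) * ((k₀:ℝ) - 2*μ0) := by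
    have h4 : (4:ℝ) ≤ (Fintype.card V : ℝ) * (1 - 2*(μ0/k₀)) := (div_le_iff₀ hdenpos).mp hV
    have heq : ((Fintype.card V:ℝ) * (1 - 2*(μ0/k₀))) * k₀
        = (Fintype.card V:ℝ) * ((k₀:ℝ) - 2*μ0) := by
      field_simp
    have key := mul_le_mul_of_nonneg_right h4 (le_of_lt hk0R)
    linarith
  have hk : ∀ u : V, (univ.filter (fun w => (G0 E).Adj u w)).card = k₀ := fun u => by
    rw [adj_row_card E hE2 u, hk0sets u]
  have hquad : ∀ y : V → ℝ, ∑ x, y x = 0 →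
      dotProduct y ((SimpleGraph.adjMatrix ℝ (G0 E)).mulVec y) ≤ μ0 * ∑ x, y x ^ 2 := by
    intro y hy
    exact quad_bound _ (adjMatrix_isHermitian (G0 E)) μ0 (k₀:ℝ)
      (eig_filter_card_le (G0 E) hn2) (adj_mulVec_one E k₀ hk)
      (by linarith) (by omega) y hy
  have cutlow : ∀ S : Finset V, delta0 E S ≠ ∅ → k₀ ≤ (delta0 E S).card := by
    intro S hSne
    obtain ⟨e, heD⟩ := Finset.nonempty_iff_ne_empty.mpr hSne
    rw [delta0, Finset.mem_filter] at heD
    have hsum2 : (e ∩ S).card + (e ∩ Sᶜ).card = 2 := by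
      rw [← Finset.filter_mem_eq_inter, ← Finset.filter_mem_eq_inter]
      have hcongr : (e.filter (· ∈ Sᶜ)) = e.filter (fun x => ¬ x ∈ S) := by
        apply Finset.filter_congr; intro x _; simp
      rw [hcongr, Finset.card_filter_add_card_filter_not, hE2 e heD.1]
    have hSne' : S.Nonempty := by
      obtain ⟨x, hx⟩ := Finset.card_pos.mp (show 0 < (e ∩ S).card by omega)
      exact ⟨x, (Finset.mem_inter.mp hx).2⟩
    have hScne : Sᶜ.Nonempty := by
      obtain ⟨x, hx⟩ := Finset.card_pos.mp (show 0 < (e ∩ Sᶜ).card by omega)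
      exact ⟨x, (Finset.mem_inter.mp hx).2⟩
    rcases le_or_gt (2 * S.card) (Fintype.card V) with hle | hgt
    · rw [← delta0_card_eq E hE2 S]
      exact cut_lower E k₀ hE2 hk μ0 hquad hμhalf hk01 hns S hSne' hle
    · rw [delta0_compl E hE2 S, ← delta0_card_eq E hE2 Sᶜ]
      apply cut_lower E k₀ hE2 hk μ0 hquad hμhalf hk01 hns Sᶜ hScne
      rw [Finset.card_compl]
      have hSle : S.card ≤ Fintype.card V := by
        have := Finset.card_le_card (Finset.subset_univ S)
        rwa [Finset.card_univ] at this
      omega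
  have hd0 : delta0 E ∅ = ∅ := by
    rw [delta0]
    apply Finset.filter_false_of_mem
    intro e he
    simp
  have hdv : delta0 E {v} = E.filter (fun e => v ∈ e) := by
    rw [delta0]
    apply Finset.filter_congr
    intro e he
    by_cases hv : v ∈ e
    · simp [Finset.inter_singleton_of_mem hv, hv]
    · simp [Finset.inter_singleton_of_notMem hv, hv]
  have hsA : sdist Fv (delta0 E ∅) = m := by
    rw [hd0]
    simp [sdist, hm]
  have hsB : sdist Fv (delta0 E {v}) = k₀ - m := by
    rw [hdv]
    unfold sdist
    rw [Finset.sdiff_eq_empty_iff_subset.mpr hFvsub, Finset.card_empty,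
      Finset.card_sdiff_of_subset hFvsub, hk0sets v, zero_add]
  unfold famDist
  apply le_antisymm
  · apply le_min
    · exact Nat.sInf_le ⟨delta0 E ∅, ⟨∅, rfl⟩, hsA⟩
    · exact Nat.sInf_le ⟨delta0 E {v}, ⟨{v}, rfl⟩, hsB⟩
  · refine le_csInf ⟨m, ?_⟩ ?_
    · exact ⟨delta0 E ∅, ⟨∅, rfl⟩, hsA⟩
    rintro d ⟨z, ⟨S, rfl⟩, rfl⟩
    by_cases hz : delta0 E S = ∅
    · rw [hz]
      have hempty : sdist Fv ∅ = m := by simp [sdist, hm]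
      rw [hempty]
      exact min_le_left _ _
    · have hk0le := cutlow S hz
      have h1 : (delta0 E S).card - Fv.card ≤ (delta0 E S \ Fv).card :=
        Finset.le_card_sdiff Fv (delta0 E S)
      unfold sdist
      have h2 : min m (k₀ - m) ≤ k₀ - m := min_le_right _ _
      omega
end
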